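/- Let M = 1 and N = 2. For all real α1, α2 with 0 < α2 < 1 < α1, the mixed-interference GDOF expression satisfies D_m(α1, α2) ≥ 2/3, the generalized degrees of freedom achieved by an orthogonal scheme. -/
import Mathlib


/-- Mixed-interference GDOF expression for the 3-user M×N partially asymmetric
MIMO Gaussian interference channel with cross-link exponents 0 < α2 < 1 < α1. -/
noncomputable def Dm (M N : ℕ) (α1 α2 : ℝ) : ℝ :=
  min (M : ℝ)
    (min ((2 * (M : ℝ) + M * α1 + ((N : ℝ) - 3 * M) * α2) / 3)
      (max (((M : ℝ) + M * α1 + ((N : ℝ) - 3 * M) * α2) / 2)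
        (((M : ℝ) + ((N : ℝ) - 2 * M) * α1 + (3 * (M : ℝ) - N) * α2) / 2)))

/-- For the 3-user 1×2 channel in the mixed-interference regime, the GDOF is at
least 2/3, the GDOF achieved by an orthogonal scheme. -/
theorem Dm_ge_orthogonal_one_two (α1 α2 : ℝ)
    (hα2 : 0 < α2) (hα21 : α2 < 1) (hα1 : 1 < α1) :
    Dm 1 2 α1 α2 ≥ 2 / 3 := by
  unfold Dm
  push_cast
  refine le_min (by norm_num) (le_min (by linarith) ?_)
  rcases le_total ((1 + 1 * α1 + (2 - 3 * 1) * α2) / 2)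
      ((1 + (2 - 2 * 1) * α1 + (3 * 1 - 2) * α2) / 2) with h | h
  · rw [max_eq_right h]; linarith
  · rw [max_eq_left h]; linarith
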